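/- Let G be an n-vertex graph with Z(G) ≤ n − k. Then G contains a k-witness. -/
import Mathlib


namespace ZeroForcing

variable {V : Type*}

/-- The set of vertices which eventually become black in the zero forcing process on `G`
starting from the initially black set `S`. -/
inductive Forced (G : SimpleGraph V) (S : Set V) : V → Prop
  | init (v : V) (hv : v ∈ S) : Forced G S v
  | force (u w : V) (hu : Forced G S u) (hadj : G.Adj u w)
      (hothers : ∀ x, G.Adj u x → x ≠ w → Forced G S x) : Forced G S w

/-- `S` is a zero forcing set of `G` if iterating the forcing rule makes every vertex black. -/
def IsZeroForcingSet (G : SimpleGraph V) (S : Set V) : Prop := ∀ v, Forced G S v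

/-- The zero forcing number of `G`: the minimum cardinality of a zero forcing set. -/
noncomputable def zeroForcingNumber (G : SimpleGraph V) [Fintype V] : ℕ :=
  sInf {k | ∃ S : Finset V, S.card = k ∧ IsZeroForcingSet G ↑S}


/-- A `k`-witness in `G`: tuples `s`, `t` with the `s i` pairwise distinct,
`s i` adjacent to `t i`, and `s i` not adjacent to `t j` for `i < j`. -/
def IsWitness {V : Type*} {k : ℕ} (G : SimpleGraph V) (s t : Fin k → V) : Prop :=
  Function.Injective s ∧ (∀ i, G.Adj (s i) (t i)) ∧
    ∀ i j : Fin k, i < j → ¬ G.Adj (s i) (t j)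

theorem forced_mono {G : SimpleGraph V} {S T : Set V} (h : S ⊆ T) {v : V}
    (hv : Forced G S v) : Forced G T v := by
  induction hv with
  | init v hv => exact .init v (h hv)
  | force u w hu hadj hothers ih1 ih2 => exact .force u w ih1 hadj fun x hx hxw => ih2 x hx hxw

lemma exists_force {G : SimpleGraph V} {S : Set V} {v : V} (hv : Forced G S v) (hvS : v ∉ S) :
    ∃ u w, u ∈ S ∧ w ∉ S ∧ G.Adj u w ∧ ∀ x, G.Adj u x → x ≠ w → x ∈ S := by
  revert hvS
  induction hv with
  | init v hv => exact fun hvS => absurd hv hvS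
  | force u w hu hadj hothers ih1 ih2 =>
    intro hvS
    by_cases huS : u ∈ S
    · by_cases hall : ∀ x, G.Adj u x → x ≠ w → x ∈ S
      · exact ⟨u, w, huS, hvS, hadj, hall⟩
      · push_neg at hall
        obtain ⟨x, hx, hxw, hxS⟩ := hall
        exact ih2 x hx hxw hxS
    · exact ih1 huS

lemma aux_witness (G : SimpleGraph V) [Fintype V] [DecidableEq V] :
    ∀ (k : ℕ) (S : Finset V), S.card + k ≤ Fintype.card V → IsZeroForcingSet G ↑S →
    ∃ s t : Fin k → V, (∀ i, G.Adj (s i) (t i)) ∧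
      (∀ i j : Fin k, i < j → ¬ G.Adj (s i) (t j)) ∧ (∀ i, t i ∉ S) := by
  intro k
  induction k with
  | zero =>
    intro S _ _
    exact ⟨Fin.elim0, Fin.elim0, fun i => i.elim0, fun i => i.elim0, fun i => i.elim0⟩
  | succ k ih =>
    intro S hcard hS
    have hv : ∃ v, v ∉ S := by
      by_contra h
      push_neg at h
      have : Fintype.card V ≤ S.card := by
        rw [← Finset.card_univ]
        exact Finset.card_le_card fun x _ => h x
      omega
    obtain ⟨v, hv⟩ := hv
    obtain ⟨u, w, huS, hwS, hadj, hall⟩ := exists_force (hS v) (by simpa using hv)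
    have hwS' : w ∉ S := by simpa using hwS
    have hcard' : (insert w S).card + k ≤ Fintype.card V := by
      rw [Finset.card_insert_of_notMem hwS']; omega
    have hS' : IsZeroForcingSet G ↑(insert w S) := by
      intro x
      refine forced_mono ?_ (hS x)
      intro a ha
      simp only [Finset.coe_insert, Set.mem_insert_iff]
      exact Or.inr ha
    obtain ⟨s', t', h1, h2, h3⟩ := ih (insert w S) hcard' hS'
    refine ⟨Fin.cons u s', Fin.cons w t', ?_, ?_, ?_⟩
    · intro i
      refine Fin.cases ?_ ?_ i
      · simpa using hadj
      · intro j; simpa using h1 j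
    · intro i j
      refine Fin.cases ?_ ?_ j
      · intro hij
        exact absurd hij (by simp [Fin.lt_iff_val_lt_val])
      · intro j'
        refine Fin.cases ?_ ?_ i
        · intro _
          simp only [Fin.cons_zero, Fin.cons_succ]
          intro hadj'
          have := h3 j'
          simp only [Finset.mem_insert, not_or] at this
          exact this.2 (hall _ hadj' this.1)
        · intro i' hij
          simp only [Fin.cons_succ]
          exact h2 i' j' (Fin.succ_lt_succ_iff.mp hij)
    · intro i
      refine Fin.cases ?_ ?_ i
      · simpa using hwS'
      · intro j
        have := h3 j
        simp only [Finset.mem_insert, not_or] at this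
        simpa using this.2

/-- **Lemma 1 (first part)**: if `G` has `n` vertices and `Z(G) ≤ n - k`, then `G`
contains a `k`-witness. -/
theorem exists_witness_of_zeroForcing {V : Type*} [Fintype V] (G : SimpleGraph V)
    (n k : ℕ) (hn : Fintype.card V = n)
    (hZ : (zeroForcingNumber G : ℤ) ≤ (n : ℤ) - (k : ℤ)) :
    ∃ s t : Fin k → V, IsWitness G s t := by
  classical
  have hne : zeroForcingNumber G ∈
      {m | ∃ S : Finset V, S.card = m ∧ IsZeroForcingSet G ↑S} := by
    apply Nat.sInf_mem
    exact ⟨Fintype.card V, Finset.univ, by simp, fun v => .init v (by simp)⟩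
  obtain ⟨S, hScard, hSzf⟩ := hne
  have hcard : S.card + k ≤ Fintype.card V := by
    have : (S.card : ℤ) ≤ (n : ℤ) - (k : ℤ) := hScard ▸ hZ
    omega
  obtain ⟨s, t, h1, h2, h3⟩ := aux_witness G k S hcard hSzf
  refine ⟨s, t, ?_, h1, h2⟩
  intro i j hij
  by_contra hne
  rcases Ne.lt_or_gt hne with h | h
  · exact h2 i j h (by rw [hij]; exact h1 j)
  · exact h2 j i h (by rw [← hij]; exact h1 i)

end ZeroForcing
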